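/- For the polynomial sequence (P_m) of the construction with each b_k a real number satisfying b_k < −6, define H̃_m = ∩_{k≥1} H^k_m. Then for every m ≥ 0: (1) H̃_m is compact and nonempty, and H̃_m = ∩_{k≥k_0} H^k_m for every k_0 ∈ ℕ; (2) P_{m+1}(H̃_m) = H̃_{m+1}; (3) H̃_m = P_{m+1}^{-1}(H̃_{m+1}) if m ≠ M_k − 1 for every k ≥ 1, while H̃_m = P_{m+1}^{-1}(H̃_{m+1}) ∩ H^k_{M_k−1} if m = M_k − 1 for some k ≥ 1. -/

import Mathlib

open Filter Set Metric
open scoped Topology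
noncomputable section

def seqQ (P : ℕ → ℂ → ℂ) (m : ℕ) : ℕ → ℂ → ℂ
  | 0 => id
  | n + 1 => if n + 1 ≤ m then id else P (n + 1) ∘ seqQ P m n

namespace Aux

lemma seqQ_of_le (P : ℕ → ℂ → ℂ) {m n : ℕ} (h : n ≤ m) : seqQ P m n = id := by
  induction n with
  | zero => rfl
  | succ n ih => simp [seqQ, h]

lemma seqQ_succ (P : ℕ → ℂ → ℂ) {m n : ℕ} (h : m ≤ n) :
    seqQ P m (n + 1) = P (n + 1) ∘ seqQ P m n := by
  have : ¬ (n + 1 ≤ m) := by omega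
  simp [seqQ, this]

lemma seqQ_comp (P : ℕ → ℂ → ℂ) {t1 t2 n : ℕ} (h1 : t1 ≤ t2) (h2 : t2 ≤ n) (z : ℂ) :
    seqQ P t1 n z = seqQ P t2 n (seqQ P t1 t2 z) := by
  induction n, h2 using Nat.le_induction with
  | base => rw [seqQ_of_le P (le_refl t2)]; rfl
  | succ n hn ih =>
    rw [seqQ_succ P (h1.trans hn), seqQ_succ P hn]
    simp [ih]

lemma base_aux (b : ℝ) (hb : b < -6) (Pk : ℂ → ℂ) (hPk : Pk = fun z => z ^ 2 + (b:ℂ)) :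
    IsCompact (connectedComponentIn (Pk ⁻¹' closedBall 0 2) (-((Real.sqrt (-b) : ℝ) : ℂ)))
    ∧ (connectedComponentIn (Pk ⁻¹' closedBall 0 2) (-((Real.sqrt (-b) : ℝ) : ℂ))).Nonempty
    ∧ Pk '' connectedComponentIn (Pk ⁻¹' closedBall 0 2) (-((Real.sqrt (-b) : ℝ) : ℂ))
      = closedBall 0 2 := by
  set β : ℂ := (b : ℂ) with hβ
  set sqf : ℂ → ℂ := fun w => Complex.exp ((1/2 : ℂ) * Complex.log (w - β)) with hsqf
  have hre : ∀ w ∈ closedBall (0:ℂ) 2, (4:ℝ) ≤ (w - β).re := by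
    intro w hw
    have h1 : |w.re| ≤ 2 := by
      have := Complex.abs_re_le_norm w
      simp only [mem_closedBall, Complex.dist_eq, sub_zero] at hw
      linarith
    have : (w - β).re = w.re - b := by simp [hβ]
    rw [this]
    have := abs_le.mp h1
    linarith
  have hne : ∀ w ∈ closedBall (0:ℂ) 2, w - β ≠ 0 := by
    intro w hw h
    have := hre w hw
    rw [h] at this
    simp at this; linarith
  have sqf_sq : ∀ w ∈ closedBall (0:ℂ) 2, sqf w ^ 2 = w - β := by
    intro w hw
    rw [hsqf]
    simp only
    rw [sq, ← Complex.exp_add]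
    ring_nf
    rw [Complex.exp_log (hne w hw)]
  have sqf_re : ∀ w ∈ closedBall (0:ℂ) 2, 0 < (sqf w).re := by
    intro w hw
    rw [hsqf]
    simp only [Complex.exp_re]
    have him : ((1/2 : ℂ) * Complex.log (w - β)).im = (w - β).arg / 2 := by
      simp [Complex.mul_im, Complex.log_im]
      ring
    rw [him]
    have harg : |(w - β).arg| < Real.pi / 2 := by
      rw [Complex.abs_arg_lt_pi_div_two_iff]
      left; linarith [hre w hw]
    have hπ := Real.pi_pos
    have hcos : 0 < Real.cos ((w - β).arg / 2) := by
      apply Real.cos_pos_of_mem_Ioo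
      constructor
      · have := (abs_lt.mp harg).1; linarith
      · have := (abs_lt.mp harg).2; linarith
    positivity
  have sqf_cont : ContinuousOn sqf (closedBall (0:ℂ) 2) := by
    intro w hw
    apply ContinuousAt.continuousWithinAt
    apply ContinuousAt.comp Complex.continuous_exp.continuousAt
    apply ContinuousAt.mul continuousAt_const
    apply (continuousAt_clog ?_).comp (by fun_prop)
    rw [Complex.mem_slitPlane_iff]
    left
    exact lt_of_lt_of_le (by norm_num) (hre w hw)
  set Spos : Set ℂ := sqf '' closedBall 0 2 with hSpos
  set Hset : Set ℂ := (fun w => -sqf w) '' closedBall 0 2 with hHset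
  set r : ℂ := ((Real.sqrt (-b) : ℝ) : ℂ) with hr
  have hbpos : (0:ℝ) < -b := by linarith
  have hr_sq : r ^ 2 = -β := by
    rw [hr, hβ, ← Complex.ofReal_pow, Real.sq_sqrt hbpos.le]
    push_cast; ring
  have hr_re : 0 < r.re := by
    rw [hr]; simpa using Real.sqrt_pos.mpr hbpos
  have hzero : (0:ℂ) ∈ closedBall (0:ℂ) 2 := by simp
  have hsqf0 : sqf 0 = r := by
    have h1 : sqf 0 ^ 2 = r ^ 2 := by rw [sqf_sq 0 hzero, hr_sq]; ring
    have h2 : (sqf 0 - r) * (sqf 0 + r) = 0 := by ring_nf; linear_combination h1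
    rcases mul_eq_zero.mp h2 with h | h
    · exact sub_eq_zero.mp h
    · exfalso
      have h3 : sqf 0 = -r := eq_neg_of_add_eq_zero_left h
      have h4 := sqf_re 0 hzero
      rw [h3] at h4
      simp only [Complex.neg_re] at h4
      linarith
  have hmemH : -r ∈ Hset := by
    rw [hHset]
    exact ⟨0, hzero, by simp only; rw [hsqf0]⟩
  set T : Set ℂ := Pk ⁻¹' closedBall 0 2 with hT
  have memT : ∀ z : ℂ, z ∈ T ↔ ‖z ^ 2 + β‖ ≤ 2 := by
    intro z
    rw [hT, hPk]
    simp [Complex.dist_eq]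
  have hT_eq : T = Spos ∪ Hset := by
    ext z
    constructor
    · intro hz
      have hw : z ^ 2 + β ∈ closedBall (0:ℂ) 2 := by
        simp [Complex.dist_eq, (memT z).mp hz]
      have h1 : sqf (z ^ 2 + β) ^ 2 = z ^ 2 := by
        rw [sqf_sq _ hw]; ring
      have h2 : (sqf (z ^ 2 + β) - z) * (sqf (z ^ 2 + β) + z) = 0 := by
        linear_combination h1
      rcases mul_eq_zero.mp h2 with h | h
      · exact Or.inl ⟨z ^ 2 + β, hw, (sub_eq_zero.mp h).symm ▸ rfl⟩
      · right
        refine ⟨z ^ 2 + β, hw, ?_⟩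
        simp only
        have := eq_neg_of_add_eq_zero_right h
        rw [← this]
    · rintro (⟨w, hw, rfl⟩ | ⟨w, hw, rfl⟩) <;>
      · rw [memT]
        have h1 : sqf w ^ 2 = w - β := sqf_sq w hw
        simp only [mem_closedBall, Complex.dist_eq, sub_zero] at hw
        first
          | (rw [h1]; simpa using hw)
          | (rw [neg_sq, h1]; simpa using hw)
  have hHsetsub : Hset ⊆ T := by rw [hT_eq]; exact subset_union_right
  have hHcomp : IsCompact Hset := by
    apply (isCompact_closedBall (0:ℂ) 2).image_of_continuousOn
    exact sqf_cont.neg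
  have hHconn : IsPreconnected Hset := by
    apply IsPreconnected.image (convex_closedBall (0:ℂ) 2).isPreconnected
    exact sqf_cont.neg
  have hcc : connectedComponentIn T (-r) = Hset := by
    apply subset_antisymm
    · have hCsub := connectedComponentIn_subset T (-r)
      have hCconn : IsPreconnected (connectedComponentIn T (-r)) :=
        isPreconnected_connectedComponentIn
      have hdisj : Disjoint {z : ℂ | z.re < 0} {z : ℂ | 0 < z.re} := by
        rw [Set.disjoint_left]
        intro z hz1 hz2
        simp only [mem_setOf_eq] at hz1 hz2
        exact absurd hz1 (not_lt.mpr hz2.le)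
      have hCsubU : connectedComponentIn T (-r) ⊆ {z : ℂ | z.re < 0} := by
        apply IsPreconnected.subset_left_of_subset_union (isOpen_lt Complex.continuous_re
          continuous_const) (isOpen_lt continuous_const Complex.continuous_re) hdisj ?_ ?_ hCconn
        · intro z hz
          rcases hT_eq ▸ (hCsub hz) with ⟨w, hw, rfl⟩ | ⟨w, hw, rfl⟩
          · exact Or.inr (sqf_re w hw)
          · exact Or.inl (by simpa using sqf_re w hw)
        · refine ⟨-r, mem_connectedComponentIn (hHsetsub hmemH), ?_⟩
          simp only [mem_setOf_eq, Complex.neg_re]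
          linarith
      intro z hz
      rcases hT_eq ▸ (hCsub hz) with ⟨w, hw, rfl⟩ | h
      · exfalso
        have h1 := hCsubU hz
        have h2 := sqf_re w hw
        simp only [mem_setOf_eq] at h1
        linarith
      · exact h
    · exact hHconn.subset_connectedComponentIn hmemH hHsetsub
  have himg : Pk '' Hset = closedBall 0 2 := by
    apply subset_antisymm
    · rintro _ ⟨z, hz, rfl⟩
      exact hHsetsub hz
    · intro w hw
      refine ⟨-sqf w, ⟨w, hw, rfl⟩, ?_⟩
      rw [hPk]
      show (-sqf w) ^ 2 + β = w
      rw [neg_sq, sqf_sq w hw]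
      ring
  rw [hcc]
  exact ⟨hHcomp, ⟨-r, hmemH⟩, himg⟩

structure Setup where
  a : ℕ → ℂ
  b : ℕ → ℝ
  mq : ℕ → ℕ
  M : ℕ → ℕ
  P : ℕ → ℂ → ℂ
  H : ℕ → ℕ → Set ℂ
  hb : ∀ k, 1 ≤ k → b k < -6
  hmk : ∀ k, 1 ≤ k → 1 ≤ mq k
  hinv1 : ∀ k, 1 ≤ k → (2 : ℝ) ^ k < 2 ^ 2 ^ mq k - ‖a k‖
  hinv2 : ∀ k, 1 ≤ k →
      (2 : ℝ) ^ k < ((2 : ℝ) ^ 2 ^ mq k - ‖a k‖) ^ 2 - |b k|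
  hM : ∀ k, M k = ∑ j ∈ Finset.range k, (mq (j + 1) + 1)
  hPa : ∀ k, 1 ≤ k → P (M k - 1) = fun z => z ^ 2 + a k
  hPb : ∀ k, 1 ≤ k → P (M k) = fun z => z ^ 2 + (b k : ℂ)
  hPother : ∀ m, 1 ≤ m → (∀ k, 1 ≤ k → m ≠ M k - 1 ∧ m ≠ M k) →
      P m = fun z => z ^ 2
  hHtop : ∀ k, 1 ≤ k → H k (M k - 1) =
      connectedComponentIn (P (M k) ⁻¹' Metric.closedBall 0 2)
        (-((Real.sqrt (-b k) : ℝ) : ℂ))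
  hHdown : ∀ k, 1 ≤ k → ∀ m, m + 2 ≤ M k →
      (∀ j, 1 ≤ j → j < k → m ≠ M j - 1) → H k m = P (m + 1) ⁻¹' H k (m + 1)
  hHdown' : ∀ k, 1 ≤ k → ∀ m, m + 2 ≤ M k → ∀ j, 1 ≤ j → j < k → m = M j - 1 →
      H k m = P (m + 1) ⁻¹' H k (m + 1) ∩ H j (M j - 1)
  hHup : ∀ k, 1 ≤ k → ∀ m, M k - 1 ≤ m → H k m = seqQ P (M k - 1) m '' H k (M k - 1)

namespace Setup

variable (S : Setup)

lemma M_zero : S.M 0 = 0 := by simp [S.hM]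

lemma M_succ (k : ℕ) : S.M (k + 1) = S.M k + (S.mq (k + 1) + 1) := by
  simp [S.hM, Finset.sum_range_succ]

lemma M_step (k : ℕ) : S.M k + 2 ≤ S.M (k + 1) := by
  have := S.hmk (k + 1) (by omega)
  rw [S.M_succ k]; omega

lemma M_mono : StrictMono S.M := by
  apply strictMono_nat_of_lt_succ
  intro k
  have := S.M_step k; omega

lemma M_ge (k : ℕ) : 2 * k ≤ S.M k := by
  induction k with
  | zero => simp
  | succ k ih => have := S.M_step k; omega

lemma two_le_M {k : ℕ} (hk : 1 ≤ k) : 2 ≤ S.M k := by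
  have := S.M_ge k; omega

/-- M j and M j - 1 ranges for j < k vs j ≥ k -/
lemma M_le_of_le {j k : ℕ} (h : j ≤ k) : S.M j ≤ S.M k := S.M_mono.monotone h

lemma Pquad (n : ℕ) (hn : 1 ≤ n) : ∃ c : ℂ, S.P n = fun z => z ^ 2 + c := by
  by_cases h1 : ∃ k, 1 ≤ k ∧ n = S.M k - 1
  · obtain ⟨k, hk, rfl⟩ := h1
    exact ⟨S.a k, S.hPa k hk⟩
  by_cases h2 : ∃ k, 1 ≤ k ∧ n = S.M k
  · obtain ⟨k, hk, rfl⟩ := h2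
    exact ⟨(S.b k : ℂ), S.hPb k hk⟩
  refine ⟨0, ?_⟩
  push_neg at h1 h2
  rw [S.hPother n hn (fun k hk => ⟨h1 k hk, h2 k hk⟩)]
  simp

lemma Pcont {n : ℕ} (hn : 1 ≤ n) : Continuous (S.P n) := by
  obtain ⟨c, hc⟩ := S.Pquad n hn
  rw [hc]; continuity

lemma Psurj {n : ℕ} (hn : 1 ≤ n) : Function.Surjective (S.P n) := by
  obtain ⟨c, hc⟩ := S.Pquad n hn
  rw [hc]
  intro w
  obtain ⟨z, hz⟩ := Complex.isAlgClosed.exists_pow_nat_eq (w - c) (n := 2) (by norm_num)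
  exact ⟨z, by simp [hz]⟩

lemma Pbounded {n : ℕ} (hn : 1 ≤ n) {t : Set ℂ} (ht : Bornology.IsBounded t) :
    Bornology.IsBounded (S.P n ⁻¹' t) := by
  obtain ⟨c, hc⟩ := S.Pquad n hn
  obtain ⟨R, hR⟩ := ht.subset_closedBall 0
  have : S.P n ⁻¹' t ⊆ closedBall 0 (Real.sqrt (|R| + ‖c‖)) := by
    intro z hz
    have h1 : ‖z ^ 2 + c‖ ≤ R := by
      have := hR hz
      simpa [Complex.dist_eq, hc] using this
    have h2 : ‖z‖ ^ 2 ≤ |R| + ‖c‖ := by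
      calc ‖z‖ ^ 2 = ‖z ^ 2‖ := by rw [norm_pow]
        _ ≤ ‖z ^ 2 + c‖ + ‖c‖ := by
            calc ‖z ^ 2‖ = ‖(z ^ 2 + c) + (-c)‖ := by ring_nf
              _ ≤ ‖z ^ 2 + c‖ + ‖-c‖ := norm_add_le _ _
              _ = ‖z ^ 2 + c‖ + ‖c‖ := by rw [norm_neg]
        _ ≤ |R| + ‖c‖ := by
            have : R ≤ |R| := le_abs_self R
            linarith
    simp only [mem_closedBall, Complex.dist_eq, sub_zero]
    have h3 : (0:ℝ) ≤ |R| + ‖c‖ := by positivity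
    exact (Real.le_sqrt (norm_nonneg z) h3).mpr h2
  exact (Metric.isBounded_closedBall).subset this

lemma seqQ_cont {t n : ℕ} (ht : 1 ≤ t) : Continuous (seqQ S.P t n) := by
  induction n with
  | zero => exact continuous_id
  | succ n ih =>
    by_cases h : n + 1 ≤ t
    · simp [seqQ, h]; exact continuous_id
    · simp only [seqQ, if_neg h]
      exact (S.Pcont (by omega)).comp ih

lemma base {k : ℕ} (hk : 1 ≤ k) :
    IsCompact (S.H k (S.M k - 1)) ∧ (S.H k (S.M k - 1)).Nonempty ∧
      S.P (S.M k) '' S.H k (S.M k - 1) = closedBall 0 2 := by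
  rw [S.hHtop k hk]
  exact base_aux (S.b k) (S.hb k hk) _ (S.hPb k hk)

lemma Hdown_sub {k m : ℕ} (hk : 1 ≤ k) (hm : m + 2 ≤ S.M k) :
    S.H k m ⊆ S.P (m + 1) ⁻¹' S.H k (m + 1) := by
  by_cases h : ∃ j, 1 ≤ j ∧ j < k ∧ m = S.M j - 1
  · obtain ⟨j, hj1, hj2, hj3⟩ := h
    rw [S.hHdown' k hk m hm j hj1 hj2 hj3]
    exact inter_subset_left
  · push_neg at h
    rw [S.hHdown k hk m hm h]

lemma chain {k m n : ℕ} (hk : 1 ≤ k) (hmn : m ≤ n) (hn : n + 1 ≤ S.M k) {z : ℂ}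
    (hz : z ∈ S.H k m) : seqQ S.P m n z ∈ S.H k n := by
  revert hn
  induction n, hmn using Nat.le_induction with
  | base => intro _; rw [seqQ_of_le S.P (le_refl m)]; exact hz
  | succ n hn' ih =>
    intro h2
    rw [seqQ_succ S.P hn']
    exact S.Hdown_sub hk (by omega) (ih (by omega))

lemma abs_add_lower (x c : ℂ) : ‖x‖ - ‖c‖ ≤ ‖x + c‖ := by
  have h := norm_add_le (x + c) (-c)
  simp only [add_neg_cancel_right, norm_neg] at h
  linarith

lemma escape {j k : ℕ} (hj : 1 ≤ j) (hjk : j < k) :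
    S.H k (S.M j) ⊆ closedBall 0 2 := by
  intro z hz
  by_contra hz2
  have hk1 : 1 ≤ k := by omega
  simp only [mem_closedBall, Complex.dist_eq, sub_zero, not_le] at hz2
  set w : ℕ → ℂ := fun n => seqQ S.P (S.M j) n z with hw
  have hstep : ∀ n, S.M j ≤ n → w (n + 1) = S.P (n + 1) (w n) := by
    intro n hn
    rw [hw]
    simp only
    rw [seqQ_succ S.P hn]
    rfl
  have growth : ∀ i, j ≤ i → i ≤ k → 2 < ‖w (S.M i)‖ := by
    intro i hji
    induction i, hji using Nat.le_induction with
    | base =>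
      intro _
      have : w (S.M j) = z := by rw [hw]; simp only; rw [seqQ_of_le S.P (le_refl _)]; rfl
      rw [this]; exact hz2
    | succ i hi ih =>
      intro hik
      have hu : 2 < ‖w (S.M i)‖ := ih (by omega)
      set u := w (S.M i) with hu_def
      have hmq1 : 1 ≤ S.mq (i + 1) := S.hmk (i + 1) (by omega)
      have hMsucc : S.M (i + 1) = S.M i + S.mq (i + 1) + 1 := by
        rw [S.M_succ]; omega
      have hMji : S.M j ≤ S.M i := S.M_le_of_le hi
      -- squarings
      have hsq : ∀ t, t ≤ S.mq (i + 1) - 1 → w (S.M i + t) = u ^ 2 ^ t := by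
        intro t
        induction t with
        | zero => intro _; simp [hu_def]
        | succ t iht =>
          intro ht
          have iht' := iht (by omega)
          have heq : S.M i + (t + 1) = (S.M i + t) + 1 := by omega
          rw [heq, hstep _ (by omega), iht']
          have hP : S.P (S.M i + t + 1) = fun z => z ^ 2 := by
            apply S.hPother _ (by omega)
            intro l hl
            rcases le_or_gt l i with h | h
            · have h1 : S.M l ≤ S.M i := S.M_le_of_le h
              constructor <;> omega
            · have h2 : S.M (i + 1) ≤ S.M l := S.M_le_of_le h
              constructor <;> omega
          rw [hP]
          show (u ^ 2 ^ t) ^ 2 = u ^ 2 ^ (t + 1)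
          rw [← pow_mul, ← pow_succ]
      have hws : w (S.M i + (S.mq (i + 1) - 1)) = u ^ 2 ^ (S.mq (i + 1) - 1) :=
        hsq _ (le_refl _)
      have hidx2 : S.M i + (S.mq (i + 1) - 1) = S.M (i + 1) - 2 := by omega
      have hstep1 : w (S.M (i + 1) - 1) = S.P (S.M (i + 1) - 1) (w (S.M (i + 1) - 2)) := by
        have h5 : S.M (i + 1) - 1 = (S.M (i + 1) - 2) + 1 := by omega
        rw [h5, hstep _ (by omega)]
      have hval1 : w (S.M (i + 1) - 1) = u ^ 2 ^ S.mq (i + 1) + S.a (i + 1) := by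
        rw [hstep1, ← hidx2, hws, S.hPa (i + 1) (by omega)]
        show (u ^ 2 ^ (S.mq (i + 1) - 1)) ^ 2 + S.a (i + 1) = _
        have hexp : 2 ^ (S.mq (i + 1) - 1) * 2 = 2 ^ S.mq (i + 1) := by
          conv_rhs => rw [show S.mq (i + 1) = (S.mq (i + 1) - 1) + 1 by omega]
          rw [pow_succ]
        rw [← pow_mul, hexp]
      have hstep2 : w (S.M (i + 1)) = S.P (S.M (i + 1)) (w (S.M (i + 1) - 1)) := by
        conv_lhs => rw [show S.M (i + 1) = (S.M (i + 1) - 1) + 1 by omega]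
        rw [hstep _ (by omega), show S.M (i + 1) - 1 + 1 = S.M (i + 1) by omega]
      have hval2 : w (S.M (i + 1)) =
          (u ^ 2 ^ S.mq (i + 1) + S.a (i + 1)) ^ 2 + (S.b (i + 1) : ℂ) := by
        rw [hstep2, hval1, S.hPb (i + 1) (by omega)]
      -- estimates
      have hi1 := S.hinv1 (i + 1) (by omega)
      have hi2 := S.hinv2 (i + 1) (by omega)
      have h2pow : (2 : ℝ) ≤ 2 ^ (i + 1) := by
        calc (2:ℝ) = 2 ^ 1 := (pow_one 2).symm
          _ ≤ 2 ^ (i + 1) := pow_le_pow_right₀ (by norm_num) (by omega)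
      have e1 : (2 : ℝ) ^ 2 ^ S.mq (i + 1) ≤ ‖u‖ ^ 2 ^ S.mq (i + 1) :=
        pow_le_pow_left₀ (by norm_num) hu.le _
      have e2 : (2 : ℝ) ^ 2 ^ S.mq (i + 1) - ‖S.a (i + 1)‖ ≤
          ‖u ^ 2 ^ S.mq (i + 1) + S.a (i + 1)‖ := by
        have := abs_add_lower (u ^ 2 ^ S.mq (i + 1)) (S.a (i + 1))
        rw [norm_pow] at this
        linarith
      have e3 : ((2 : ℝ) ^ 2 ^ S.mq (i + 1) - ‖S.a (i + 1)‖) ^ 2 ≤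
          ‖u ^ 2 ^ S.mq (i + 1) + S.a (i + 1)‖ ^ 2 := by
        apply pow_le_pow_left₀ _ e2
        nlinarith [h2pow]
      have e4 : ((2 : ℝ) ^ 2 ^ S.mq (i + 1) - ‖S.a (i + 1)‖) ^ 2 - |S.b (i + 1)| ≤
          ‖w (S.M (i + 1))‖ := by
        rw [hval2]
        have h6 := abs_add_lower ((u ^ 2 ^ S.mq (i + 1) + S.a (i + 1)) ^ 2) ((S.b (i + 1) : ℂ))
        rw [norm_pow] at h6
        rw [Complex.norm_real, Real.norm_eq_abs] at h6
        linarith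
      linarith
  have hMjk : S.M j + 1 ≤ S.M k := S.M_mono hjk
  have hchain := S.chain hk1 (show S.M j ≤ S.M k - 1 by omega) (by omega) hz
  have hsub : S.H k (S.M k - 1) ⊆ S.P (S.M k) ⁻¹' closedBall 0 2 := by
    rw [S.hHtop k hk1]
    exact connectedComponentIn_subset _ _
  have h8 : ‖S.P (S.M k) (w (S.M k - 1))‖ ≤ 2 := by
    have := hsub hchain
    simpa [Complex.dist_eq] using this
  have h9 : w (S.M k) = S.P (S.M k) (w (S.M k - 1)) := by
    conv_lhs => rw [show S.M k = (S.M k - 1) + 1 by omega]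
    rw [hstep _ (by omega), show S.M k - 1 + 1 = S.M k by omega]
  have h10 := growth k (by omega) (le_refl k)
  rw [h9] at h10
  linarith

lemma Hsurj {k m : ℕ} (hk : 1 ≤ k) (hm : m + 2 ≤ S.M k) :
    S.P (m + 1) '' S.H k m = S.H k (m + 1) := by
  by_cases h : ∃ j, 1 ≤ j ∧ j < k ∧ m = S.M j - 1
  · obtain ⟨j, hj1, hj2, hj3⟩ := h
    have hMj : m + 1 = S.M j := by have := S.two_le_M hj1; omega
    rw [S.hHdown' k hk m hm j hj1 hj2 hj3]
    apply subset_antisymm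
    · rintro _ ⟨x, ⟨hx1, _⟩, rfl⟩
      exact hx1
    · intro y hy
      have hy2 : y ∈ closedBall (0 : ℂ) 2 := S.escape hj1 hj2 (by rw [← hMj]; exact hy)
      rw [← (S.base hj1).2.2] at hy2
      obtain ⟨x, hx1, hx2⟩ := hy2
      have hx2' : S.P (m + 1) x = y := by rw [hMj]; exact hx2
      exact ⟨x, ⟨by rw [mem_preimage, hx2']; exact hy, hj3 ▸ hx1⟩, hx2'⟩
  · push_neg at h
    rw [S.hHdown k hk m hm h]
    exact Set.image_preimage_eq _ (S.Psurj (by omega))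

lemma Hup_image {k m : ℕ} (hk : 1 ≤ k) (hm : S.M k - 1 ≤ m) :
    S.P (m + 1) '' S.H k m = S.H k (m + 1) := by
  rw [S.hHup k hk m hm, S.hHup k hk (m + 1) (by omega), seqQ_succ S.P hm, image_comp]

lemma Himage {k : ℕ} (hk : 1 ≤ k) (m : ℕ) :
    S.P (m + 1) '' S.H k m = S.H k (m + 1) := by
  rcases le_or_gt (m + 2) (S.M k) with h | h
  · exact S.Hsurj hk h
  · exact S.Hup_image hk (by omega)

lemma Hsub_preimage {k : ℕ} (hk : 1 ≤ k) (m : ℕ) :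
    S.H k m ⊆ S.P (m + 1) ⁻¹' S.H k (m + 1) := by
  intro z hz
  rw [mem_preimage, ← S.Himage hk m]
  exact mem_image_of_mem _ hz

lemma Hcpt_ne {k : ℕ} (hk : 1 ≤ k) (m : ℕ) :
    IsCompact (S.H k m) ∧ (S.H k m).Nonempty := by
  have hM2 := S.two_le_M hk
  have hdown : ∀ t m, m + t = S.M k - 1 → IsCompact (S.H k m) ∧ (S.H k m).Nonempty := by
    intro t
    induction t with
    | zero =>
      intro m hm
      rw [show m = S.M k - 1 by omega]
      exact ⟨(S.base hk).1, (S.base hk).2.1⟩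
    | succ t ih =>
      intro m hm
      have h1 := ih (m + 1) (by omega)
      have hm2 : m + 2 ≤ S.M k := by omega
      constructor
      · have hcl : IsClosed (S.H k m) := by
          by_cases h : ∃ j, 1 ≤ j ∧ j < k ∧ m = S.M j - 1
          · obtain ⟨j, hj1, hj2, hj3⟩ := h
            rw [S.hHdown' k hk m hm2 j hj1 hj2 hj3]
            exact (h1.1.isClosed.preimage (S.Pcont (by omega))).inter (S.base hj1).1.isClosed
          · push_neg at h
            rw [S.hHdown k hk m hm2 h]
            exact h1.1.isClosed.preimage (S.Pcont (by omega))
        have hbd : Bornology.IsBounded (S.H k m) :=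
          (S.Pbounded (by omega) h1.1.isBounded).subset (S.Hdown_sub hk hm2)
        exact Metric.isCompact_of_isClosed_isBounded hcl hbd
      · obtain ⟨y, hy⟩ := h1.2
        rw [← S.Hsurj hk hm2] at hy
        obtain ⟨x, hx, _⟩ := hy
        exact ⟨x, hx⟩
  rcases le_or_gt (S.M k - 1) m with h | h
  · rw [S.hHup k hk m h]
    obtain ⟨hc, hn⟩ := hdown 0 (S.M k - 1) (by omega)
    exact ⟨hc.image (S.seqQ_cont (by omega)), hn.image _⟩
  · exact hdown (S.M k - 1 - m) m (by omega)

lemma Hmono_succ {k : ℕ} (hk : 1 ≤ k) (m : ℕ) : S.H (k + 1) m ⊆ S.H k m := by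
  have hk1 : 1 ≤ k + 1 := by omega
  have hM2 := S.two_le_M hk
  have hstepM := S.M_step k
  have hbase : S.H (k + 1) (S.M k - 1) ⊆ S.H k (S.M k - 1) := by
    rw [S.hHdown' (k + 1) hk1 (S.M k - 1) (by omega) k hk (by omega) rfl]
    exact inter_subset_right
  have hdown : ∀ t m, m + t = S.M k - 1 → S.H (k + 1) m ⊆ S.H k m := by
    intro t
    induction t with
    | zero =>
      intro m hm
      rw [show m = S.M k - 1 by omega]
      exact hbase
    | succ t ih =>
      intro m hm
      have ih1 := ih (m + 1) (by omega)
      have hm2 : m + 2 ≤ S.M k := by omega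
      have hm2' : m + 2 ≤ S.M (k + 1) := by omega
      by_cases h : ∃ j, 1 ≤ j ∧ j < k ∧ m = S.M j - 1
      · obtain ⟨j, hj1, hj2, hj3⟩ := h
        rw [S.hHdown' k hk m hm2 j hj1 hj2 hj3,
          S.hHdown' (k + 1) hk1 m hm2' j hj1 (by omega) hj3]
        exact inter_subset_inter (preimage_mono ih1) (le_refl _)
      · push_neg at h
        have h' : ∀ j, 1 ≤ j → j < k + 1 → m ≠ S.M j - 1 := by
          intro j hj1 hj2
          rcases Nat.lt_or_ge j k with hlt | hge
          · exact h j hj1 hlt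
          · have hjk : j = k := by omega
            subst hjk
            omega
        rw [S.hHdown k hk m hm2 h, S.hHdown (k + 1) hk1 m hm2' h']
        exact preimage_mono ih1
  have hup : ∀ m, S.M k - 1 ≤ m → m + 1 ≤ S.M (k + 1) → S.H (k + 1) m ⊆ S.H k m := by
    intro m hm
    induction m, hm using Nat.le_induction with
    | base => intro _; exact hbase
    | succ m hm ih =>
      intro hm2
      have ih1 := ih (by omega)
      rw [← S.Hsurj hk1 (show m + 2 ≤ S.M (k + 1) by omega), ← S.Hup_image hk hm]
      exact image_mono ih1
  rcases le_or_gt m (S.M k - 1) with h | h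
  · exact hdown (S.M k - 1 - m) m (by omega)
  rcases le_or_gt (m + 1) (S.M (k + 1)) with h2 | h2
  · exact hup m (by omega) h2
  · have htop : S.H (k + 1) (S.M (k + 1) - 1) ⊆ S.H k (S.M (k + 1) - 1) :=
      hup _ (by omega) (by omega)
    rw [S.hHup (k + 1) hk1 m (by omega), S.hHup k hk m (by omega)]
    rintro _ ⟨x, hx, rfl⟩
    have hx2 := htop hx
    rw [S.hHup k hk (S.M (k + 1) - 1) (by omega)] at hx2
    obtain ⟨v, hv, hvx⟩ := hx2
    refine ⟨v, hv, ?_⟩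
    rw [seqQ_comp S.P (show S.M k - 1 ≤ S.M (k + 1) - 1 by omega)
      (show S.M (k + 1) - 1 ≤ m by omega) v, hvx]

lemma Hmono {k l : ℕ} (hk : 1 ≤ k) (hkl : k ≤ l) (m : ℕ) : S.H l m ⊆ S.H k m := by
  induction l, hkl using Nat.le_induction with
  | base => exact le_refl _
  | succ l hl ih => exact (S.Hmono_succ (by omega) m).trans ih

end Setup





end Aux

theorem Htilde_invariance
    (a : ℕ → ℂ) (b : ℕ → ℝ) (mk : ℕ → ℕ) (M : ℕ → ℕ)
    (hb : ∀ k, 1 ≤ k → b k < -6)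
    (hmk : ∀ k, 1 ≤ k → 1 ≤ mk k)
    (hinv1 : ∀ k, 1 ≤ k → (2 : ℝ) ^ k < 2 ^ 2 ^ mk k - ‖a k‖)
    (hinv2 : ∀ k, 1 ≤ k →
      (2 : ℝ) ^ k < ((2 : ℝ) ^ 2 ^ mk k - ‖a k‖) ^ 2 - |b k|)
    (hM : ∀ k, M k = ∑ j ∈ Finset.range k, (mk (j + 1) + 1))
    (P : ℕ → ℂ → ℂ)
    (hPa : ∀ k, 1 ≤ k → P (M k - 1) = fun z => z ^ 2 + a k)
    (hPb : ∀ k, 1 ≤ k → P (M k) = fun z => z ^ 2 + (b k : ℂ))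
    (hPother : ∀ m, 1 ≤ m → (∀ k, 1 ≤ k → m ≠ M k - 1 ∧ m ≠ M k) →
      P m = fun z => z ^ 2)
    (G H : ℕ → ℕ → Set ℂ)
    (hGtop : ∀ k, 1 ≤ k → G k (M k - 1) =
      connectedComponentIn (P (M k) ⁻¹' Metric.closedBall 0 2)
        ((Real.sqrt (-b k) : ℝ) : ℂ))
    (hHtop : ∀ k, 1 ≤ k → H k (M k - 1) =
      connectedComponentIn (P (M k) ⁻¹' Metric.closedBall 0 2)
        (-((Real.sqrt (-b k) : ℝ) : ℂ)))
    (hGdown : ∀ k, 1 ≤ k → ∀ m, m + 2 ≤ M k →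
      (∀ j, 1 ≤ j → j < k → m ≠ M j - 1) → G k m = P (m + 1) ⁻¹' G k (m + 1))
    (hGdown' : ∀ k, 1 ≤ k → ∀ m, m + 2 ≤ M k → ∀ j, 1 ≤ j → j < k → m = M j - 1 →
      G k m = P (m + 1) ⁻¹' G k (m + 1) ∩ G j (M j - 1))
    (hHdown : ∀ k, 1 ≤ k → ∀ m, m + 2 ≤ M k →
      (∀ j, 1 ≤ j → j < k → m ≠ M j - 1) → H k m = P (m + 1) ⁻¹' H k (m + 1))
    (hHdown' : ∀ k, 1 ≤ k → ∀ m, m + 2 ≤ M k → ∀ j, 1 ≤ j → j < k → m = M j - 1 →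
      H k m = P (m + 1) ⁻¹' H k (m + 1) ∩ H j (M j - 1))
    (hGup : ∀ k, 1 ≤ k → ∀ m, M k - 1 ≤ m → G k m = seqQ P (M k - 1) m '' G k (M k - 1))
    (hHup : ∀ k, 1 ≤ k → ∀ m, M k - 1 ≤ m → H k m = seqQ P (M k - 1) m '' H k (M k - 1))
    (Ht : ℕ → Set ℂ)
    (hHt : ∀ m, Ht m = ⋂ k, ⋂ (_ : 1 ≤ k), H k m) :
    ∀ m : ℕ,
      (IsCompact (Ht m) ∧ (Ht m).Nonempty ∧
        ∀ k₀ : ℕ, 1 ≤ k₀ → Ht m = ⋂ k, ⋂ (_ : k₀ ≤ k), H k m) ∧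
      (P (m + 1) '' Ht m = Ht (m + 1)) ∧
      ((∀ k, 1 ≤ k → m ≠ M k - 1) → Ht m = P (m + 1) ⁻¹' Ht (m + 1)) ∧
      (∀ k, 1 ≤ k → m = M k - 1 →
        Ht m = P (m + 1) ⁻¹' Ht (m + 1) ∩ H k (M k - 1)) := by
  intro m
  let S : Aux.Setup :=
    ⟨a, b, mk, M, P, H, hb, hmk, hinv1, hinv2, hM, hPa, hPb, hPother, hHtop,
      hHdown, hHdown', hHup⟩
  have himg : ∀ k n, 1 ≤ k → P (n + 1) '' H k n = H k (n + 1) :=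
    fun k n hk => S.Himage hk n
  have hcptne : ∀ k n, 1 ≤ k → IsCompact (H k n) ∧ (H k n).Nonempty :=
    fun k n hk => S.Hcpt_ne hk n
  have hmono : ∀ k l n, 1 ≤ k → k ≤ l → H l n ⊆ H k n :=
    fun k l n hk hkl => S.Hmono hk hkl n
  have hcont : ∀ n : ℕ, Continuous (P (n + 1)) := fun n => S.Pcont (by omega)
  have hMge : ∀ k, 2 * k ≤ M k := S.M_ge
  have hMmono : StrictMono M := S.M_mono
  have hM2 : ∀ k, 1 ≤ k → 2 ≤ M k := fun k hk => S.two_le_M hk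
  have hmem : ∀ n (z : ℂ), z ∈ Ht n ↔ ∀ k, 1 ≤ k → z ∈ H k n := by
    intro n z
    rw [hHt n]
    simp
  have hseq : ∀ n, Ht n = ⋂ i : ℕ, H (i + 1) n := by
    intro n
    ext z
    rw [hmem]
    simp only [mem_iInter]
    constructor
    · intro h i; exact h (i + 1) (by omega)
    · intro h k hk
      have := h (k - 1)
      rwa [show k - 1 + 1 = k by omega] at this
  have part1 : ∀ n, IsCompact (Ht n) ∧ (Ht n).Nonempty ∧
      ∀ k₀, 1 ≤ k₀ → Ht n = ⋂ k, ⋂ (_ : k₀ ≤ k), H k n := by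
    intro n
    refine ⟨?_, ?_, ?_⟩
    · apply IsCompact.of_isClosed_subset (hcptne 1 n (le_refl 1)).1
      · rw [hseq n]
        exact isClosed_iInter (fun i => (hcptne (i + 1) n (by omega)).1.isClosed)
      · rw [hseq n]
        exact iInter_subset _ 0
    · rw [hseq n]
      apply IsCompact.nonempty_iInter_of_sequence_nonempty_isCompact_isClosed
      · intro i; exact hmono (i + 1) (i + 2) n (by omega) (by omega)
      · intro i; exact (hcptne (i + 1) n (by omega)).2
      · exact (hcptne 1 n (le_refl 1)).1
      · intro i; exact (hcptne (i + 1) n (by omega)).1.isClosed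
    · intro k₀ hk₀
      ext z
      rw [hmem]
      simp only [mem_iInter]
      constructor
      · intro h k hk
        exact h k (by omega)
      · intro h k hk
        exact hmono k (max k k₀) n hk (le_max_left _ _) (h (max k k₀) (le_max_right _ _))
  have part2 : ∀ n, P (n + 1) '' Ht n = Ht (n + 1) := by
    intro n
    apply subset_antisymm
    · rintro _ ⟨x, hx, rfl⟩
      rw [hmem]
      intro k hk
      rw [← himg k n hk]
      exact mem_image_of_mem _ ((hmem n x).mp hx k hk)
    · intro z hz
      set F : ℕ → Set ℂ := fun i => H (i + 1) n ∩ P (n + 1) ⁻¹' {z} with hF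
      have hFne : ∀ i, (F i).Nonempty := by
        intro i
        have hz1 : z ∈ H (i + 1) (n + 1) := (hmem (n + 1) z).mp hz (i + 1) (by omega)
        rw [← himg (i + 1) n (by omega)] at hz1
        obtain ⟨x, hx, hxz⟩ := hz1
        exact ⟨x, hx, by simp [hxz]⟩
      have hFcl : ∀ i, IsClosed (F i) := fun i =>
        ((hcptne (i + 1) n (by omega)).1.isClosed).inter
          (isClosed_singleton.preimage (hcont n))
      have hFcpt : IsCompact (F 0) :=
        (hcptne 1 n (le_refl 1)).1.inter_right (isClosed_singleton.preimage (hcont n))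
      have hFdec : ∀ i, F (i + 1) ⊆ F i := fun i =>
        inter_subset_inter (hmono (i + 1) (i + 2) n (by omega) (by omega)) (le_refl _)
      obtain ⟨x, hx⟩ := IsCompact.nonempty_iInter_of_sequence_nonempty_isCompact_isClosed
        F hFdec hFne hFcpt hFcl
      simp only [mem_iInter, hF, mem_inter_iff, mem_preimage, mem_singleton_iff] at hx
      refine ⟨x, ?_, (hx 0).2⟩
      rw [hmem]
      intro k hk
      have := (hx (k - 1)).1
      rwa [show k - 1 + 1 = k by omega] at this
  refine ⟨part1 m, part2 m, ?_, ?_⟩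
  · intro hns
    apply subset_antisymm
    · intro z hz
      rw [mem_preimage, ← part2 m]
      exact mem_image_of_mem _ hz
    · intro z hz
      rw [mem_preimage] at hz
      rw [hmem]
      intro k hk
      have h2k' : 2 ≤ max (max k m) 2 := le_max_right _ _
      have hmk' : m ≤ max (max k m) 2 := le_trans (le_max_right k m) (le_max_left _ _)
      have hkk' : k ≤ max (max k m) 2 := le_trans (le_max_left k m) (le_max_left _ _)
      have hm2 : m + 2 ≤ M (max (max k m) 2) := by
        have := hMge (max (max k m) 2)
        omega
      have hz2 : z ∈ H (max (max k m) 2) m := by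
        rw [hHdown (max (max k m) 2) (by omega) m hm2 (fun j hj1 _ => hns j hj1),
          mem_preimage]
        exact (hmem (m + 1) _).mp hz (max (max k m) 2) (by omega)
      exact hmono k (max (max k m) 2) m hk hkk' hz2
  · intro k hk hmk2
    apply subset_antisymm
    · intro z hz
      refine ⟨?_, ?_⟩
      · rw [mem_preimage, ← part2 m]
        exact mem_image_of_mem _ hz
      · have := (hmem m z).mp hz k hk
        rwa [hmk2] at this
    · rintro z ⟨hz1, hz2⟩
      rw [hmem]
      intro l hl
      rcases le_or_gt l k with h | h
      · apply hmono l k m hl h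
        rw [hmk2]
        exact hz2
      · have hm2 : m + 2 ≤ M l := by
          have h1 : M k < M l := hMmono h
          have h2 := hM2 k hk
          omega
        rw [hHdown' l (by omega) m hm2 k hk h hmk2]
        exact ⟨(hmem (m + 1) _).mp hz1 l (by omega), hz2⟩
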